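/- Let m ≥ 0, Q(y) = √8(m+1)y^m/(1+y^{2m+2}), A_θ[Q](y) = -2(m+1)y^{2m+2}/(1+y^{2m+2}), and define A_Q* f = -∂_y f - ((m+2+A_θ[Q](y))/y)·f. Then A_Q*(1/(y²Q)) = 0, i.e., the function y ↦ 1/(y²Q(y)) lies in the kernel of A_Q*. -/

import Mathlib

/-- The `m`-equivariant Jackiw–Pi vortex profile. -/
noncomputable def Q (m : ℕ) (r : ℝ) : ℝ :=
  Real.sqrt 8 * (m + 1) * r ^ m / (1 + r ^ (2 * m + 2))

/-- Closed-form of the angular connection component `A_θ[Q]`. -/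
noncomputable def AthetaQ (m : ℕ) (y : ℝ) : ℝ :=
  -2 * (m + 1) * y ^ (2 * m + 2) / (1 + y ^ (2 * m + 2))

/-- `A_Q* (1/(y²Q)) = 0`: the function `y ↦ 1/(y²Q(y))` lies in the kernel of
`A_Q* = -∂_y - (m+2+A_θ[Q])/y`. -/
theorem stmt7 (m : ℕ) (y : ℝ) (hy : 0 < y) :
    -deriv (fun t => 1 / (t ^ 2 * Q m t)) y
      - ((m + 2 + AthetaQ m y) / y) * (1 / (y ^ 2 * Q m y)) = 0 := by
  have hs : (0:ℝ) < Real.sqrt 8 := Real.sqrt_pos.mpr (by norm_num)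
  have hc : (0:ℝ) < Real.sqrt 8 * (m + 1) := by positivity
  have key : ∀ t : ℝ, 0 < t →
      1 / (t ^ 2 * Q m t)
        = (1 + t ^ (2 * m + 2)) / (Real.sqrt 8 * (m + 1) * t ^ (m + 2)) := by
    intro t ht
    have h1 : (0:ℝ) < 1 + t ^ (2 * m + 2) := by positivity
    unfold Q
    rw [div_eq_div_iff (by positivity) (by positivity)]
    field_simp
    ring
  have hev : (fun t => 1 / (t ^ 2 * Q m t))
      =ᶠ[nhds y] (fun t => (1 + t ^ (2 * m + 2)) / (Real.sqrt 8 * (m + 1) * t ^ (m + 2))) := by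
    filter_upwards [eventually_gt_nhds hy] with t ht using key t ht
  have hden : Real.sqrt 8 * (m + 1) * y ^ (m + 2) ≠ 0 := by positivity
  have hnum : HasDerivAt (fun t : ℝ => 1 + t ^ (2 * m + 2))
      ((2 * m + 2 : ℕ) * y ^ (2 * m + 1)) y := by
    simpa using (hasDerivAt_pow (2 * m + 2) y).const_add 1
  have hden' : HasDerivAt (fun t : ℝ => Real.sqrt 8 * (m + 1) * t ^ (m + 2))
      (Real.sqrt 8 * (m + 1) * ((m + 2 : ℕ) * y ^ (m + 1))) y :=
    (hasDerivAt_pow (m + 2) y).const_mul _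
  have hd : HasDerivAt (fun t : ℝ => (1 + t ^ (2 * m + 2)) / (Real.sqrt 8 * (m + 1) * t ^ (m + 2))) _ y :=
    hnum.div hden' hden
  rw [hev.deriv_eq, hd.deriv, key y hy]
  unfold AthetaQ
  have h1 : (0:ℝ) < 1 + y ^ (2 * m + 2) := by positivity
  field_simp
  push_cast
  ring
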